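/- Let 0 < q < 1, let a, b, c, d ∈ ℂ and let n ∈ ℕ satisfy a·b·c·d·q^j ≠ 1 for all 0 ≤ j ≤ n; set θ = 1/√(1−q). Let φ : ℕ×ℕ → ℂ satisfy the recursions (SolA) and (SolB) at every pair (m,n′) with m + n′ = n. For 0 ≤ ℓ ≤ n+1 and t ∈ ℂ define G_ℓ(t) = Σ_{k=0}^{ℓ} binom_q(ℓ,k)·φ(k,ℓ−k)·t^k (and set G_{−1} = 0). Then for every t ∈ ℂ: (1 − abcd·q^n)·G_{n+1}(t) = θ·[(a+b)(1 − t·cd)·G_n(q·t) + (c+d)(t − q^n·ab)·G_n(t)] − θ²·(1 − q^n)·[ab·(1 − t·cd)·G_{n−1}(q·t) + t·cd·(t − ab·q^n)·G_{n−1}(t)]. -/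
import Mathlib


noncomputable section

open scoped BigOperators

/-- The q-integer `[k]_q = 1 + q + ⋯ + q^{k-1}` (with `[0]_q = 0`). -/
def qIntC (q : ℂ) (k : ℕ) : ℂ := ∑ i ∈ Finset.range k, q ^ i

/-- The Gaussian (q-)binomial coefficient, characterized by
`qBinom q n 0 = 1`, `qBinom q 0 (k+1) = 0` and the Pascal-type rule
`qBinom q (n+1) (k+1) = q^(k+1) * qBinom q n (k+1) + qBinom q n k`. -/
def qBinom (q : ℂ) : ℕ → ℕ → ℂ
  | _, 0 => 1
  | 0, _ + 1 => 0
  | n + 1, k + 1 => q ^ (k + 1) * qBinom q n (k + 1) + qBinom q n k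

/-- Recursion (SolA) at `(m,n)`; terms that would carry a negative index are written
with truncated subtraction, their coefficients `[0]_q = 0` vanishing. -/
def SolA (q θ a b c d : ℂ) (φ : ℕ → ℕ → ℂ) (m n : ℕ) : Prop :=
  (1 - a * b * c * d * q ^ (m + n)) * φ (m + 1) n =
    θ * (c + d - c * d * (a + b) * q ^ m) * φ m n
      - c * d * qIntC q m * φ (m - 1) n
      + a * b * c * d * q ^ m * qIntC q n * φ m (n - 1)

/-- Recursion (SolB) at `(m,n)`; terms that would carry a negative index are written
with truncated subtraction, their coefficients `[0]_q = 0` vanishing. -/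
def SolB (q θ a b c d : ℂ) (φ : ℕ → ℕ → ℂ) (m n : ℕ) : Prop :=
  (1 - a * b * c * d * q ^ (m + n)) * φ m (n + 1) =
    θ * (a + b - a * b * (c + d) * q ^ n) * φ m n
      - a * b * qIntC q n * φ m (n - 1)
      + a * b * c * d * q ^ n * qIntC q m * φ (m - 1) n

/-- `Gfun q φ ℓ t = Σ_{k=0}^{ℓ} binom_q(ℓ,k)·φ(k,ℓ-k)·t^k`. -/
def Gfun (q : ℂ) (φ : ℕ → ℕ → ℂ) (ℓ : ℕ) (t : ℂ) : ℂ :=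
  ∑ k ∈ Finset.range (ℓ + 1), qBinom q ℓ k * φ k (ℓ - k) * t ^ k

lemma qIntC_zero (q : ℂ) : qIntC q 0 = 0 := rfl

lemma qIntC_add (q : ℂ) (m k : ℕ) : qIntC q (m + k) = qIntC q m + q ^ m * qIntC q k := by
  unfold qIntC
  rw [Finset.sum_range_add, Finset.mul_sum]
  simp [pow_add]

lemma qBinom_zero_right (q : ℂ) (n : ℕ) : qBinom q n 0 = 1 := by cases n <;> rfl

lemma qBinom_succ (q : ℂ) (n k : ℕ) :
    qBinom q (n+1) (k+1) = q ^ (k + 1) * qBinom q n (k + 1) + qBinom q n k := rfl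

lemma qBinom_eq_zero (q : ℂ) : ∀ n k, n < k → qBinom q n k = 0
  | 0, _+1, _ => rfl
  | n+1, k+1, h => by
    rw [qBinom_succ, qBinom_eq_zero q n (k+1) (by omega), qBinom_eq_zero q n k (by omega)]
    ring

lemma lemAB (q : ℂ) (n : ℕ) :
    (∀ k, qIntC q (n+1-k) * qBinom q (n+1) k = qIntC q (n+1) * qBinom q n k)
    ∧ (∀ k, qIntC q (k+1) * qBinom q (n+1) (k+1) = qIntC q (n+1) * qBinom q n k) := by
  induction n with
  | zero =>
    constructor
    · intro k
      match k with
      | 0 => rw [qBinom_zero_right, qBinom_zero_right, Nat.sub_zero]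
      | j+1 =>
        rw [show 1 - (j+1) = 0 from by omega, qIntC_zero, qBinom_eq_zero q 0 (j+1) (by omega)]
        ring
    · intro k
      match k with
      | 0 => rw [qBinom_succ, qBinom_eq_zero q 0 1 (by omega)]; ring
      | j+1 =>
        rw [qBinom_succ, qBinom_eq_zero q 0 (j+2) (by omega),
          qBinom_eq_zero q 0 (j+1) (by omega)]; ring
  | succ n ih =>
    obtain ⟨ihA, ihB⟩ := ih
    have A : ∀ k, qIntC q (n+2-k) * qBinom q (n+2) k = qIntC q (n+2) * qBinom q (n+1) k := by
      intro k
      match k with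
      | 0 => rw [qBinom_zero_right, qBinom_zero_right, Nat.sub_zero]
      | j+1 =>
        by_cases hj : j ≤ n+1
        · have h1 := ihA j
          have h2 := ihB j
          have h3 : qIntC q (n+2) = qIntC q (j+1) + q^(j+1) * qIntC q (n+1-j) := by
            rw [← qIntC_add]; congr 1; omega
          rw [show n+2-(j+1) = n+1-j from by omega, qBinom_succ]
          linear_combination h1 - h2 - qBinom q (n+1) (j+1) * h3
        · rw [show n+2-(j+1) = 0 from by omega, qIntC_zero,
            qBinom_eq_zero q (n+1) (j+1) (by omega)]
          ring
    refine ⟨A, ?_⟩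
    intro k
    by_cases hk : k ≤ n+1
    · have h1 := ihA k
      have h2 := ihB k
      have h3 : qIntC q (n+2) = qIntC q (k+1) + q^(k+1) * qIntC q (n+1-k) := by
        rw [← qIntC_add]; congr 1; omega
      rw [qBinom_succ]
      linear_combination q^(k+1) * h2 - q^(k+1) * h1 - qBinom q (n+1) k * h3
    · rw [qBinom_succ, qBinom_eq_zero q (n+1) (k+1) (by omega),
        qBinom_eq_zero q (n+1) k (by omega)]
      ring

lemma lemA' (q : ℂ) (n k : ℕ) :
    qIntC q (n-k) * qBinom q n k = qIntC q n * qBinom q (n-1) k := by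
  match n with
  | 0 => rw [show 0-k = 0 from by omega]
  | m+1 => exact (lemAB q m).1 k

lemma lemB' (q : ℂ) (n k : ℕ) :
    qIntC q (k+1) * qBinom q n (k+1) = qIntC q n * qBinom q (n-1) k := by
  match n with
  | 0 => rw [qBinom_eq_zero q 0 (k+1) (by omega), qIntC_zero]; ring
  | m+1 => exact (lemAB q m).2 k

lemma split (q : ℂ) (n : ℕ) (f : ℕ → ℂ) :
    ∑ k ∈ Finset.range (n+2), qBinom q (n+1) k * f k
      = ∑ k ∈ Finset.range (n+1), q^k * qBinom q n k * f k
        + ∑ k ∈ Finset.range (n+1), qBinom q n k * f (k+1) := by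
  rw [Finset.sum_range_succ' (fun k => qBinom q (n+1) k * f k) (n+1)]
  rw [Finset.sum_range_succ' (fun k => q^k * qBinom q n k * f k) n]
  simp only [qBinom_succ, qBinom_zero_right, pow_zero, one_mul, add_mul]
  rw [Finset.sum_add_distrib]
  rw [Finset.sum_range_succ (fun j => q^(j+1) * qBinom q n (j+1) * f (j+1)) n]
  rw [qBinom_eq_zero q n (n+1) (by omega)]
  ring

lemma qIntC_mul_sum (x : ℂ) (n : ℕ) (g : ℕ → ℂ) :
    qIntC x n * ∑ k ∈ Finset.range (n-1+1), g k = ∑ k ∈ Finset.range n, qIntC x n * g k := by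
  cases n with
  | zero => simp [qIntC]
  | succ m => rw [Finset.mul_sum]; norm_num

theorem stmt14 (q : ℝ) (hq0 : 0 < q) (hq1 : q < 1)
    (a b c d : ℂ) (n : ℕ)
    (hsing : ∀ j : ℕ, j ≤ n → a * b * c * d * (q : ℂ) ^ j ≠ 1)
    (θ : ℂ) (hθ : θ = ((1 / Real.sqrt (1 - q) : ℝ) : ℂ))
    (φ : ℕ → ℕ → ℂ)
    (hA : ∀ m n' : ℕ, m + n' = n → SolA (q : ℂ) θ a b c d φ m n')
    (hB : ∀ m n' : ℕ, m + n' = n → SolB (q : ℂ) θ a b c d φ m n') :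
    ∀ t : ℂ,
      (1 - a * b * c * d * (q : ℂ) ^ n) * Gfun (q : ℂ) φ (n + 1) t =
        θ * ((a + b) * (1 - t * c * d) * Gfun (q : ℂ) φ n ((q : ℂ) * t)
              + (c + d) * (t - (q : ℂ) ^ n * a * b) * Gfun (q : ℂ) φ n t)
          - θ ^ 2 * (1 - (q : ℂ) ^ n) *
              (a * b * (1 - t * c * d) * Gfun (q : ℂ) φ (n - 1) ((q : ℂ) * t)
                + t * c * d * (t - a * b * (q : ℂ) ^ n) * Gfun (q : ℂ) φ (n - 1) t) := by
  intro t
  have h1q : (0:ℝ) < 1 - q := by linarith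
  have hth2 : θ^2 * (1 - (q:ℂ)) = 1 := by
    rw [hθ]
    have e : ((1 / Real.sqrt (1-q) : ℝ):ℂ)^2 * (1 - (q:ℂ))
        = (((1 / Real.sqrt (1-q))^2 * (1-q) : ℝ) : ℂ) := by push_cast; ring
    rw [e, div_pow, one_pow, Real.sq_sqrt h1q.le, one_div, inv_mul_cancel₀ h1q.ne']
    norm_num
  have hg : qIntC (q:ℂ) n * ((q:ℂ) - 1) = (q:ℂ)^n - 1 := geom_sum_mul (q:ℂ) n
  have hIn : θ^2 * (1 - (q:ℂ)^n) = qIntC (q:ℂ) n := by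
    linear_combination θ^2 * hg + qIntC (q:ℂ) n * hth2
  -- Left-hand side normal form
  have hL : (1 - a*b*c*d*(q:ℂ)^n) * Gfun (q:ℂ) φ (n+1) t
      = (∑ k ∈ Finset.range (n+1), θ * qBinom (q:ℂ) n k *
            ((a+b)*(q:ℂ)^k*t^k - a*b*(c+d)*(q:ℂ)^n*t^k + (c+d)*t^(k+1)
              - c*d*(a+b)*(q:ℂ)^k*t^(k+1)) * φ k (n-k))
        + ((∑ k ∈ Finset.range n, qIntC (q:ℂ) (n-k) * qBinom (q:ℂ) n k *
              (a*b*c*d*(q:ℂ)^k*t^(k+1) - a*b*(q:ℂ)^k*t^k) * φ k (n-(k+1)))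
          + (∑ k ∈ Finset.range n, qIntC (q:ℂ) (k+1) * qBinom (q:ℂ) n (k+1) *
              (a*b*c*d*(q:ℂ)^n*t^(k+1) - c*d*t^(k+2)) * φ k (n-(k+1)))) := by
    calc (1 - a*b*c*d*(q:ℂ)^n) * Gfun (q:ℂ) φ (n+1) t
        = ∑ k ∈ Finset.range (n+2), qBinom (q:ℂ) (n+1) k *
            (φ k (n+1-k) * t^k * (1 - a*b*c*d*(q:ℂ)^n)) := by
          unfold Gfun
          rw [Finset.mul_sum]
          exact Finset.sum_congr rfl fun k _ => by ring
      _ = ∑ k ∈ Finset.range (n+1), (q:ℂ)^k * qBinom (q:ℂ) n k *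
            (φ k (n+1-k) * t^k * (1 - a*b*c*d*(q:ℂ)^n))
          + ∑ k ∈ Finset.range (n+1), qBinom (q:ℂ) n k *
            (φ (k+1) (n+1-(k+1)) * t^(k+1) * (1 - a*b*c*d*(q:ℂ)^n)) :=
          split (q:ℂ) n (fun k => φ k (n+1-k) * t^k * (1 - a*b*c*d*(q:ℂ)^n))
      _ = ∑ k ∈ Finset.range (n+1),
            (θ * qBinom (q:ℂ) n k *
              ((a+b)*(q:ℂ)^k*t^k - a*b*(c+d)*(q:ℂ)^n*t^k + (c+d)*t^(k+1)
                - c*d*(a+b)*(q:ℂ)^k*t^(k+1)) * φ k (n-k)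
            + qIntC (q:ℂ) (n-k) * qBinom (q:ℂ) n k *
              (a*b*c*d*(q:ℂ)^k*t^(k+1) - a*b*(q:ℂ)^k*t^k) * φ k (n-k-1)
            + qIntC (q:ℂ) k * qBinom (q:ℂ) n k *
              (a*b*c*d*(q:ℂ)^n*t^k - c*d*t^(k+1)) * φ (k-1) (n-k)) := by
          rw [← Finset.sum_add_distrib]
          apply Finset.sum_congr rfl
          intro k hk
          have hkn : k ≤ n := by
            have := Finset.mem_range.mp hk; omega
          have hB' := hB k (n-k) (by omega)
          unfold SolB at hB'
          rw [show k + (n-k) = n from by omega] at hB'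
          have hA' := hA k (n-k) (by omega)
          unfold SolA at hA'
          rw [show k + (n-k) = n from by omega] at hA'
          have hqp : (q:ℂ)^k * (q:ℂ)^(n-k) = (q:ℂ)^n := by
            rw [← pow_add]; congr 1; omega
          rw [show n+1-k = n-k+1 from by omega, show n+1-(k+1) = n-k from by omega]
          linear_combination ((q:ℂ)^k * qBinom (q:ℂ) n k * t^k) * hB'
            + (qBinom (q:ℂ) n k * t^(k+1)) * hA'
            + (qBinom (q:ℂ) n k * t^k *
                (a*b*c*d * qIntC (q:ℂ) k * φ (k-1) (n-k)
                  - θ * a*b*(c+d) * φ k (n-k))) * hqp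
      _ = (∑ k ∈ Finset.range (n+1), θ * qBinom (q:ℂ) n k *
              ((a+b)*(q:ℂ)^k*t^k - a*b*(c+d)*(q:ℂ)^n*t^k + (c+d)*t^(k+1)
                - c*d*(a+b)*(q:ℂ)^k*t^(k+1)) * φ k (n-k))
          + (∑ k ∈ Finset.range (n+1), qIntC (q:ℂ) (n-k) * qBinom (q:ℂ) n k *
              (a*b*c*d*(q:ℂ)^k*t^(k+1) - a*b*(q:ℂ)^k*t^k) * φ k (n-k-1))
          + (∑ k ∈ Finset.range (n+1), qIntC (q:ℂ) k * qBinom (q:ℂ) n k *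
              (a*b*c*d*(q:ℂ)^n*t^k - c*d*t^(k+1)) * φ (k-1) (n-k)) := by
          rw [← Finset.sum_add_distrib, ← Finset.sum_add_distrib]
      _ = (∑ k ∈ Finset.range (n+1), θ * qBinom (q:ℂ) n k *
              ((a+b)*(q:ℂ)^k*t^k - a*b*(c+d)*(q:ℂ)^n*t^k + (c+d)*t^(k+1)
                - c*d*(a+b)*(q:ℂ)^k*t^(k+1)) * φ k (n-k))
          + ((∑ k ∈ Finset.range n, qIntC (q:ℂ) (n-k) * qBinom (q:ℂ) n k *
              (a*b*c*d*(q:ℂ)^k*t^(k+1) - a*b*(q:ℂ)^k*t^k) * φ k (n-(k+1)))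
          + (∑ k ∈ Finset.range n, qIntC (q:ℂ) (k+1) * qBinom (q:ℂ) n (k+1) *
              (a*b*c*d*(q:ℂ)^n*t^(k+1) - c*d*t^(k+2)) * φ k (n-(k+1)))) := by
          rw [add_assoc]
          congr 1
          congr 1
          · rw [Finset.sum_range_succ, Nat.sub_self, qIntC_zero]
            simp only [zero_mul, add_zero]
            apply Finset.sum_congr rfl
            intro k hk
            rw [show n-k-1 = n-(k+1) from by omega]
          · rw [Finset.sum_range_succ' (fun k => qIntC (q:ℂ) k * qBinom (q:ℂ) n k *
              (a*b*c*d*(q:ℂ)^n*t^k - c*d*t^(k+1)) * φ (k-1) (n-k)) n]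
            rw [qIntC_zero]
            simp only [zero_mul, add_zero]
            apply Finset.sum_congr rfl
            intro k hk
            simp only [Nat.add_sub_cancel]
  -- Right-hand side normal forms
  have hR1 : θ * ((a+b)*(1 - t*c*d) * Gfun (q:ℂ) φ n ((q:ℂ)*t)
        + (c+d)*(t - (q:ℂ)^n*a*b) * Gfun (q:ℂ) φ n t)
      = ∑ k ∈ Finset.range (n+1), θ * qBinom (q:ℂ) n k *
          ((a+b)*(q:ℂ)^k*t^k - a*b*(c+d)*(q:ℂ)^n*t^k + (c+d)*t^(k+1)
            - c*d*(a+b)*(q:ℂ)^k*t^(k+1)) * φ k (n-k) := by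
    unfold Gfun
    rw [Finset.mul_sum, Finset.mul_sum, ← Finset.sum_add_distrib, Finset.mul_sum]
    apply Finset.sum_congr rfl
    intro k hk
    simp only [mul_pow]
    ring
  have hR2 : θ^2 * (1 - (q:ℂ)^n) *
        (a*b*(1 - t*c*d)*Gfun (q:ℂ) φ (n-1) ((q:ℂ)*t)
          + t*c*d*(t - a*b*(q:ℂ)^n)*Gfun (q:ℂ) φ (n-1) t)
      = ∑ k ∈ Finset.range n, qIntC (q:ℂ) n * qBinom (q:ℂ) (n-1) k *
          (a*b*(q:ℂ)^k*t^k - a*b*c*d*(q:ℂ)^k*t^(k+1) + c*d*t^(k+2)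
            - a*b*c*d*(q:ℂ)^n*t^(k+1)) * φ k (n-(k+1)) := by
    rw [hIn]
    unfold Gfun
    rw [Finset.mul_sum, Finset.mul_sum, ← Finset.sum_add_distrib, qIntC_mul_sum]
    apply Finset.sum_congr rfl
    intro k hk
    rw [show n-1-k = n-(k+1) from by omega]
    simp only [mul_pow]
    ring
  -- coefficient matching for the non-θ parts
  have hBC : (∑ k ∈ Finset.range n, qIntC (q:ℂ) (n-k) * qBinom (q:ℂ) n k *
        (a*b*c*d*(q:ℂ)^k*t^(k+1) - a*b*(q:ℂ)^k*t^k) * φ k (n-(k+1)))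
      + (∑ k ∈ Finset.range n, qIntC (q:ℂ) (k+1) * qBinom (q:ℂ) n (k+1) *
        (a*b*c*d*(q:ℂ)^n*t^(k+1) - c*d*t^(k+2)) * φ k (n-(k+1)))
      + ∑ k ∈ Finset.range n, qIntC (q:ℂ) n * qBinom (q:ℂ) (n-1) k *
          (a*b*(q:ℂ)^k*t^k - a*b*c*d*(q:ℂ)^k*t^(k+1) + c*d*t^(k+2)
            - a*b*c*d*(q:ℂ)^n*t^(k+1)) * φ k (n-(k+1)) = 0 := by
    rw [← Finset.sum_add_distrib, ← Finset.sum_add_distrib]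
    apply Finset.sum_eq_zero
    intro k hk
    have h1 := lemA' (q:ℂ) n k
    have h2 := lemB' (q:ℂ) n k
    linear_combination ((a*b*c*d*(q:ℂ)^k*t^(k+1) - a*b*(q:ℂ)^k*t^k) * φ k (n-(k+1))) * h1
      + ((a*b*c*d*(q:ℂ)^n*t^(k+1) - c*d*t^(k+2)) * φ k (n-(k+1))) * h2
  linear_combination hL - hR1 + hR2 + hBC

end
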